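/- Let G be a chordal graph with terminal set T ⊆ V(G), and let v be a vertex of G with v ∉ T such that no neighbour of v belongs to T. Then G contains a T-cycle if and only if the induced subgraph G − {v} contains a T-cycle. -/

import Mathlib

open SimpleGraph

variable {V : Type*}

/-- A `T`-triangle, represented as its vertex set: three pairwise adjacent
vertices at least one of which is a terminal. -/
def IsTTriangle (G : SimpleGraph V) (T Δ : Set V) : Prop :=
  ∃ a b c : V, Δ = {a, b, c} ∧ G.Adj a b ∧ G.Adj a c ∧ G.Adj b c ∧
    (a ∈ T ∨ b ∈ T ∨ c ∈ T)

/-- The induced subgraph `G − S` contains a `T`-triangle. -/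
def HasTTriangleAvoiding (G : SimpleGraph V) (T S : Set V) : Prop :=
  ∃ Δ : Set V, IsTTriangle G T Δ ∧ Δ ∩ S = ∅

/-- The induced subgraph `G − S` contains a `T`-cycle: a cycle of `G` avoiding
`S` and passing through a vertex of `T`. -/
def HasTCycleAvoiding (G : SimpleGraph V) (T S : Set V) : Prop :=
  ∃ (v : V) (c : G.Walk v v), c.IsCycle ∧ (∀ x ∈ c.support, x ∉ S) ∧
    ∃ t ∈ T, t ∈ c.support

/-- `S` is a subset feedback vertex set of `G` with respect to `T`:
`G − S` contains no `T`-cycle. -/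
def IsSubsetFVS (G : SimpleGraph V) (T S : Set V) : Prop :=
  ¬ HasTCycleAvoiding G T S

/-- A cycle has a chord: an edge of `G` between two vertices of the cycle
which is not an edge of the cycle. -/
def WalkHasChord (G : SimpleGraph V) {v : V} (c : G.Walk v v) : Prop :=
  ∃ x y : V, x ∈ c.support ∧ y ∈ c.support ∧ G.Adj x y ∧ s(x, y) ∉ c.edges

/-- A graph is chordal if every cycle of length at least four has a chord. -/
def Chordal (G : SimpleGraph V) : Prop :=
  ∀ (v : V) (c : G.Walk v v), c.IsCycle → 4 ≤ c.length → WalkHasChord G c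

/-- A bridge: an edge lying on no cycle of the graph. -/
def IsBridgeEdge (G : SimpleGraph V) (e : Sym2 V) : Prop :=
  e ∈ G.edgeSet ∧ ∀ (v : V) (c : G.Walk v v), c.IsCycle → e ∉ c.edges

/-- `(K, I)` is a split partition of `G`: `K` is a clique, `I` an independent
set, and they partition the vertex set. -/
def IsSplitPartition (G : SimpleGraph V) (K I : Set V) : Prop :=
  K ∪ I = Set.univ ∧ K ∩ I = ∅ ∧ G.IsClique K ∧ I.Pairwise fun a b => ¬ G.Adj a b

/-- The closed neighbourhood `N[v]` of a vertex. -/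
def closedNbhd (G : SimpleGraph V) (v : V) : Set V := insert v (G.neighborSet v)

/-- A vertex is simplicial if its closed neighbourhood is a clique. -/
def IsSimplicial (G : SimpleGraph V) (v : V) : Prop := G.IsClique (closedNbhd G v)

/-- A maximal clique. -/
def IsMaxClique (G : SimpleGraph V) (C : Set V) : Prop :=
  G.IsClique C ∧ ∀ C' : Set V, G.IsClique C' → C ⊆ C' → C' = C

/-- A matching, as a set of edges of `G` no two of which share an endvertex. -/
def IsEdgeMatching (G : SimpleGraph V) (M : Set (Sym2 V)) : Prop :=
  M ⊆ G.edgeSet ∧ ∀ e ∈ M, ∀ f ∈ M, e ≠ f → ∀ z : V, z ∈ e → z ∉ f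

/-- A set of edges saturates a vertex if some edge of it is incident with it. -/
def Saturates (M : Set (Sym2 V)) (z : V) : Prop := ∃ e ∈ M, z ∈ e

/-- `M` is a `t`-expansion of `X` into `Y`: every edge of `M` goes between `X`
and `Y`, every vertex of `X` is incident with exactly `t` edges of `M`, and the
edges of `M` are incident with exactly `t * |X|` distinct vertices of `Y`. -/
def IsExpansion (G : SimpleGraph V) (t : ℕ) (X Y : Set V) (M : Set (Sym2 V)) : Prop :=
  M ⊆ G.edgeSet ∧ (∀ e ∈ M, ∃ x ∈ X, ∃ y ∈ Y, e = s(x, y)) ∧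
    (∀ x ∈ X, {e ∈ M | x ∈ e}.ncard = t) ∧
    {y ∈ Y | Saturates M y}.ncard = t * X.ncard

private lemma mem_tail_of_closed {G : SimpleGraph V} {u z : V} {c : G.Walk u u}
    (hc : c ≠ SimpleGraph.Walk.nil) (hz : z ∈ c.support) : z ∈ c.support.tail := by
  cases c with
  | nil => exact absurd rfl hc
  | cons h p =>
    simp only [Walk.support_cons, List.tail_cons]
    rcases (by simpa using hz : z = u ∨ z ∈ p.support) with rfl | h'
    · exact p.end_mem_support
    · exact h'


private lemma end_mem_support_tail {G : SimpleGraph V} {a b : V} (p : G.Walk a b)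
    (h : a ≠ b) : b ∈ p.support.tail := by
  have hm := p.end_mem_support
  rw [p.support_eq_cons, List.mem_cons] at hm
  rcases hm with h' | h'
  · exact absurd h'.symm h
  · exact h'

private lemma two_le_length_of_chord {G : SimpleGraph V} {a b : V} (p : G.Walk a b)
    (hab : a ≠ b) (he : s(a, b) ∉ p.edges) : 2 ≤ p.length := by
  cases p with
  | nil => exact absurd rfl hab
  | cons h q =>
    cases q with
    | nil => exact absurd (by simp) he
    | cons h' q' => simp only [Walk.length_cons]; omega

private lemma triangle_of_cycle [DecidableEq V] {G : SimpleGraph V} (hG : Chordal G) {t : V} :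
    ∀ (n : ℕ) (u : V) (c : G.Walk u u), c.IsCycle → c.length ≤ n → t ∈ c.support →
      ∃ a b : V, G.Adj t a ∧ G.Adj t b ∧ G.Adj a b := by
  intro n
  induction n with
  | zero =>
    intro u c hc hlen _
    have := hc.three_le_length; omega
  | succ n ih =>
    intro u c hc hlen ht
    by_cases h4 : 4 ≤ c.length
    · obtain ⟨x, y, hx, hy, hadj, hchord⟩ := hG u c hc h4
      have hxy : x ≠ y := hadj.ne
      set c' := c.rotate x hx with hc'def
      have hc'c : c'.IsCycle := hc.rotate hx
      have hne : c ≠ Walk.nil := hc.ne_nil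
      have htailperm := Walk.support_rotate c x hx
      have hy' : y ∈ c'.support := by
        have : y ∈ c'.support.tail := htailperm.perm.mem_iff.2 (mem_tail_of_closed hne hy)
        exact List.mem_of_mem_tail this
      have ht' : t ∈ c'.support := by
        have : t ∈ c'.support.tail := htailperm.perm.mem_iff.2 (mem_tail_of_closed hne ht)
        exact List.mem_of_mem_tail this
      set p1 := c'.takeUntil y hy' with hp1def
      set p2 := c'.dropUntil y hy' with hp2def
      have hspec : p1.append p2 = c' := c'.take_spec hy'
      -- length facts
      have hlen' : c'.length = c.length := by
        have h1 : p1.length + p2.length = c'.length := by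
          rw [← hspec]; exact (Walk.length_append _ _).symm
        have h2 : (c.takeUntil x hx).length + (c.dropUntil x hx).length = c.length := by
          rw [← Walk.length_append, c.take_spec hx]
        have h3 : c'.length = (c.dropUntil x hx).length + (c.takeUntil x hx).length := by
          rw [hc'def, Walk.rotate, Walk.length_append]
        omega
      have hlensum : p1.length + p2.length = c.length := by
        have : p1.length + p2.length = c'.length := by
          rw [← hspec]; exact (Walk.length_append _ _).symm
        omega
      -- support decomposition
      have hsup : c'.support = p1.support ++ p2.support.tail := by
        rw [← hspec, Walk.support_append]
      have hsupc' : c'.support = x :: c'.support.tail := by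
        rw [← c'.support_eq_cons]
      have hp1sup : p1.support = x :: p1.support.tail := by
        rw [← p1.support_eq_cons]
      have htailsplit : c'.support.tail = p1.support.tail ++ p2.support.tail := by
        have h := hsupc'.symm.trans hsup
        rw [hp1sup, List.cons_append] at h
        injection h
      have hnd : c'.support.tail.Nodup := hc'c.2
      rw [htailsplit, List.nodup_append] at hnd
      obtain ⟨hnd1, hnd2, hdisj⟩ := hnd
      have hy_in_p1tail : y ∈ p1.support.tail := end_mem_support_tail p1 hxy
      have hx_in_p2tail : x ∈ p2.support.tail := end_mem_support_tail p2 (Ne.symm hxy)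
      -- paths
      have hp1path : p1.IsPath := by
        rw [Walk.isPath_def, hp1sup, List.nodup_cons]
        exact ⟨fun hmem => hdisj _ hmem _ hx_in_p2tail rfl, hnd1⟩
      have hp2path : p2.IsPath := by
        rw [Walk.isPath_def, p2.support_eq_cons, List.nodup_cons]
        exact ⟨fun hmem => hdisj _ hy_in_p1tail _ hmem rfl, hnd2⟩
      -- chord not in either part
      have hchord' : s(x, y) ∉ c'.edges := fun h =>
        hchord ((Walk.rotate_edges c x hx).perm.mem_iff.1 h)
      have hch1 : s(y, x) ∉ p1.edges := fun h => by
        rw [Sym2.eq_swap] at h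
        exact hchord' (Walk.edges_takeUntil_subset _ _ h)
      have hch2 : s(x, y) ∉ p2.edges := fun h =>
        hchord' (Walk.edges_dropUntil_subset _ _ h)
      -- lower bounds on lengths
      have hch1' : s(x, y) ∉ p1.edges := fun h => hchord' (Walk.edges_takeUntil_subset _ _ h)
      have hp1len : 2 ≤ p1.length := two_le_length_of_chord p1 hxy hch1'
      have hp2len : 2 ≤ p2.length := two_le_length_of_chord p2 (Ne.symm hxy)
        (fun h => hch2 (by rwa [Sym2.eq_swap] at h))
      -- where is t
      rw [hsup] at ht'
      rcases List.mem_append.1 ht' with htp | htp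
      · -- use cycle cons hadj.symm p1 : Walk y y
        have hcyc : (Walk.cons hadj.symm p1).IsCycle :=
          (Walk.cons_isCycle_iff p1 hadj.symm).2 ⟨hp1path, hch1⟩
        refine ih y (Walk.cons hadj.symm p1) hcyc ?_ ?_
        · simp only [Walk.length_cons]; omega
        · simp [Walk.support_cons, htp]
      · have hcyc : (Walk.cons hadj p2).IsCycle :=
          (Walk.cons_isCycle_iff p2 hadj).2 ⟨hp2path, hch2⟩
        refine ih x (Walk.cons hadj p2) hcyc ?_ ?_
        · simp only [Walk.length_cons]; omega
        · simp only [Walk.support_cons, List.mem_cons]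
          exact Or.inr (List.mem_of_mem_tail htp)
    · -- length exactly 3
      have h3 := hc.three_le_length
      have : c.length = 3 := by omega
      clear hlen h4 h3 ih
      cases c with
      | nil => simp at this
      | cons h1 p =>
        cases p with
        | nil => simp at this
        | cons h2 q =>
          cases q with
          | nil => simp [Walk.length_cons] at this
          | cons h3 r =>
            cases r with
            | nil =>
              simp only [Walk.support_cons, Walk.support_nil, List.mem_cons,
                List.mem_singleton] at ht
              rcases ht with rfl | rfl | rfl | rfl | hbad
              · exact ⟨_, _, h1, h3.symm, h2⟩
              · exact ⟨_, _, h1.symm, h2, h3.symm⟩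
              · exact ⟨_, _, h2.symm, h3, h1.symm⟩
              · exact ⟨_, _, h1, h3.symm, h2⟩
              · simp at hbad
            | cons h4 s => simp [Walk.length_cons] at this

/-- deleting a non-terminal vertex with no terminal neighbour
preserves the existence of a `T`-cycle in a chordal graph. -/
theorem stmt1 {V : Type} [Fintype V] (G : SimpleGraph V) (T : Set V)
    (hG : Chordal G) (v : V) (hvT : v ∉ T)
    (hnbr : ∀ u : V, G.Adj v u → u ∉ T) :
    HasTCycleAvoiding G T ∅ ↔ HasTCycleAvoiding G T {v} := by
  classical
  constructor
  · rintro ⟨u, c, hc, -, t, htT, hts⟩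
    obtain ⟨a, b, hta, htb, hab⟩ :=
      triangle_of_cycle hG c.length u c hc le_rfl hts
    -- the triangle t-a-b avoids v
    have htv : t ≠ v := fun h => hvT (h ▸ htT)
    have hav : a ≠ v := fun h => hnbr t (h ▸ hta).symm htT
    have hbv : b ≠ v := fun h => hnbr t (h ▸ htb).symm htT
    refine ⟨t, Walk.cons hta (Walk.cons hab (Walk.cons htb.symm Walk.nil)), ?_, ?_, t, htT, ?_⟩
    · rw [Walk.cons_isCycle_iff]
      constructor
      · rw [Walk.isPath_def]
        simp [hab.ne, hta.ne.symm, htb.ne.symm]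
      · simp only [Walk.edges_cons, Walk.edges_nil, List.mem_cons, List.not_mem_nil, or_false]
        rintro (h | h) <;> rw [Sym2.eq_iff] at h
        · rcases h with ⟨h1, -⟩ | ⟨h1, -⟩
          · exact hta.ne h1
          · exact htb.ne h1
        · rcases h with ⟨-, h1⟩ | ⟨-, h1⟩
          · exact hta.ne' h1
          · exact hab.ne h1
    · intro x hx
      simp only [Walk.support_cons, Walk.support_nil, List.mem_cons, List.not_mem_nil,
        or_false, List.mem_singleton] at hx
      rcases hx with rfl | rfl | rfl | rfl <;> simp [htv, hav, hbv]
    · simp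
  · rintro ⟨u, c, hc, -, t, htT, hts⟩
    exact ⟨u, c, hc, fun x _ h => h, t, htT, hts⟩
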